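/- arXiv:1706.09291 — 3 statements merged into one kernel-verified Lean document; each statement's English description precedes it below -/
import Mathlib

section
/- If the limit point P_L of a proper parametrization P(t) of a rational curve C is reached by the parametrization (i.e., there exists t₀ ∈ K with P(t₀) = P_L), then P_L is a singular point of C, i.e., mult_{P_L}(C) ≥ 2. -/
open Polynomial

def projEqParam {K : Type*} [Field K] (p₁ p₂ p : K[X]) (x y : K) : Prop :=
  p₁.eval x * p.eval y = p.eval x * p₁.eval y ∧
  p₂.eval x * p.eval y = p.eval x * p₂.eval y ∧
  p₁.eval x * p₂.eval y = p₂.eval x * p₁.eval y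

/-- Properness (birationality) of the parametrization. -/
def IsProperParam {K : Type*} [Field K] (p₁ p₂ p : K[X]) : Prop :=
  {x : K | ∃ y : K, y ≠ x ∧ projEqParam p₁ p₂ p x y}.Finite

/-- The parametrized curve is not a line. -/
def NotLine {K : Type*} [Field K] (p₁ p₂ p : K[X]) : Prop :=
  ¬ ∃ a b c : K, (a ≠ 0 ∨ b ≠ 0 ∨ c ≠ 0) ∧ C a * p₁ + C b * p₂ + C c * p = 0

/-- Degree-`d` homogenization of `r`, as an element of `(K[h])[t]`
(inner variable `h`, outer variable `t`). -/
noncomputable def homog {K : Type*} [Field K] (d : ℕ) (r : K[X]) :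
    Polynomial (Polynomial K) :=
  ∑ j ∈ Finset.range (d + 1), Polynomial.C (Polynomial.C (r.coeff j) * X ^ (d - j)) * X ^ j

/-- Total degree of an element of `(K[h])[t]`. -/
noncomputable def totalDeg {K : Type*} [Field K] (F : Polynomial (Polynomial K)) : ℕ :=
  F.support.sup fun j => j + (F.coeff j).natDegree

/-- The homogeneous fibre function of the projective point `(a : b : c)` with respect
to the homogeneous parametrization `(p̄₁ : p̄₂ : p̄)` of degree `d`. -/
noncomputable def homogFibre {K : Type*} [Field K] [DecidableEq K]
    (p₁ p₂ p : K[X]) (d : ℕ) (a b c : K) : Polynomial (Polynomial K) :=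
  gcd (gcd (Polynomial.C (Polynomial.C a) * homog d p - Polynomial.C (Polynomial.C c) * homog d p₁)
        (Polynomial.C (Polynomial.C b) * homog d p - Polynomial.C (Polynomial.C c) * homog d p₂))
    (Polynomial.C (Polynomial.C a) * homog d p₂ - Polynomial.C (Polynomial.C b) * homog d p₁)

/-- Multiplicity of the curve at the point `(a : b : c)`: the (total) degree of its
homogeneous fibre function. -/
noncomputable def multAt {K : Type*} [Field K] [DecidableEq K]
    (p₁ p₂ p : K[X]) (d : ℕ) (a b c : K) : ℕ :=
  totalDeg (homogFibre p₁ p₂ p d a b c)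

section helpers
variable {K : Type*} [Field K]

lemma homog_coeff (d : ℕ) (r : K[X]) (j : ℕ) (hj : j ≤ d) :
    (homog d r).coeff j = Polynomial.C (r.coeff j) * X ^ (d - j) := by
  unfold homog
  rw [Polynomial.finset_sum_coeff]
  rw [Finset.sum_eq_single j]
  · rw [Polynomial.C_mul_X_pow_eq_monomial, Polynomial.coeff_monomial]
    simp
  · intro i _ hne
    rw [Polynomial.C_mul_X_pow_eq_monomial, Polynomial.coeff_monomial]
    simp [hne]
  · intro h
    exact absurd (Finset.mem_range_succ_iff.mpr hj) h

lemma homog_comb (d : ℕ) (a c : K) (r s : K[X]) :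
    homog d (Polynomial.C a * r - Polynomial.C c * s)
      = Polynomial.C (Polynomial.C a) * homog d r - Polynomial.C (Polynomial.C c) * homog d s := by
  unfold homog
  rw [Finset.mul_sum, Finset.mul_sum, ← Finset.sum_sub_distrib]
  refine Finset.sum_congr rfl fun j _ => ?_
  simp only [coeff_sub, coeff_C_mul, map_sub, map_mul]
  ring

lemma eq_zero_of_homog_eq_zero {d : ℕ} {r : K[X]} (hr : r.natDegree ≤ d)
    (h : homog d r = 0) : r = 0 := by
  ext j
  rcases le_or_gt j d with hj | hj
  · have := homog_coeff d r j hj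
    rw [h, Polynomial.coeff_zero] at this
    have hx : (X : K[X]) ^ (d - j) ≠ 0 := pow_ne_zero _ X_ne_zero
    have : Polynomial.C (r.coeff j) = 0 := by
      rcases mul_eq_zero.mp this.symm with h' | h'
      · exact h'
      · exact absurd h' hx
    simpa using (C_eq_zero.mp this)
  · simp [coeff_eq_zero_of_natDegree_lt (lt_of_le_of_lt hr hj)]

lemma C_X_dvd_homog {d : ℕ} {r : K[X]} (h : r.coeff d = 0) :
    Polynomial.C (X : K[X]) ∣ homog d r := by
  unfold homog
  refine Finset.dvd_sum fun j hj => ?_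
  rcases eq_or_lt_of_le (Finset.mem_range_succ_iff.mp hj) with h1 | h1
  · simp [h1, h]
  · refine Dvd.dvd.mul_right ?_ _
    refine map_dvd (Polynomial.C (R := K[X])) ?_
    exact Dvd.dvd.mul_left (dvd_pow_self X (Nat.sub_ne_zero_of_lt h1)) _

lemma homog_eval (d : ℕ) (r : K[X]) (hr : r.natDegree ≤ d) (t₀ : K) :
    (homog d r).eval (Polynomial.C t₀ * X) = Polynomial.C (r.eval t₀) * X ^ d := by
  unfold homog
  rw [Polynomial.eval_finset_sum]
  rw [Polynomial.eval_eq_sum_range' (Nat.lt_succ_of_le hr)]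
  rw [map_sum, Finset.sum_mul]
  refine Finset.sum_congr rfl fun j hj => ?_
  have hjd : j ≤ d := Finset.mem_range_succ_iff.mp hj
  have hx : (X : K[X]) ^ (d - j) * X ^ j = X ^ d := by
    rw [← pow_add, Nat.sub_add_cancel hjd]
  simp only [eval_mul, eval_C, eval_pow, eval_X, map_mul, map_pow, mul_pow]
  linear_combination (Polynomial.C (r.coeff j) * Polynomial.C t₀ ^ j) * hx

lemma linfac_dvd {d : ℕ} {r : K[X]} (hr : r.natDegree ≤ d) {t₀ : K} (h : r.eval t₀ = 0) :
    (X - Polynomial.C (Polynomial.C t₀ * X)) ∣ homog d r := by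
  rw [Polynomial.dvd_iff_isRoot]
  simp [IsRoot, homog_eval d r hr t₀, h]

end helpers

/-- If the limit point `P_L = (a_d : b_d : c_d)` of a proper parametrization of a
rational curve (not a line) is reached by the parametrization, then it is a singular
point: its multiplicity is at least `2`. -/
theorem limit_point_reached_singular (K : Type*) [Field K] [DecidableEq K]
    [IsAlgClosed K] [CharZero K] (p₁ p₂ p : K[X])
    (hgcd : IsUnit (gcd (gcd p₁ p₂) p))
    (hproper : IsProperParam p₁ p₂ p) (hline : NotLine p₁ p₂ p)
    (d : ℕ) (hd : d = max (max p₁.natDegree p₂.natDegree) p.natDegree)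
    (a b c : K) (ha : a = p₁.coeff d) (hb : b = p₂.coeff d) (hc : c = p.coeff d)
    (t₀ : K)
    (h₁ : a * p.eval t₀ - c * p₁.eval t₀ = 0)
    (h₂ : b * p.eval t₀ - c * p₂.eval t₀ = 0)
    (h₃ : a * p₂.eval t₀ - b * p₁.eval t₀ = 0) :
    2 ≤ multAt p₁ p₂ p d a b c := by
  -- degree bounds
  have hd1 : p₁.natDegree ≤ d := by rw [hd]; exact le_max_of_le_left (le_max_left _ _)
  have hd2 : p₂.natDegree ≤ d := by rw [hd]; exact le_max_of_le_left (le_max_right _ _)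
  have hd3 : p.natDegree ≤ d := by rw [hd]; exact le_max_right _ _
  set r1 : K[X] := Polynomial.C a * p - Polynomial.C c * p₁ with hr1
  set r2 : K[X] := Polynomial.C b * p - Polynomial.C c * p₂ with hr2
  set r3 : K[X] := Polynomial.C a * p₂ - Polynomial.C b * p₁ with hr3
  have hn1 : r1.natDegree ≤ d := le_trans (natDegree_sub_le _ _)
    (max_le (le_trans (natDegree_C_mul_le _ _) hd3) (le_trans (natDegree_C_mul_le _ _) hd1))
  have hn2 : r2.natDegree ≤ d := le_trans (natDegree_sub_le _ _)
    (max_le (le_trans (natDegree_C_mul_le _ _) hd3) (le_trans (natDegree_C_mul_le _ _) hd2))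
  have hn3 : r3.natDegree ≤ d := le_trans (natDegree_sub_le _ _)
    (max_le (le_trans (natDegree_C_mul_le _ _) hd2) (le_trans (natDegree_C_mul_le _ _) hd1))
  have hc1 : r1.coeff d = 0 := by
    simp only [hr1, coeff_sub, coeff_C_mul, ← ha, ← hc]; ring
  have hc2 : r2.coeff d = 0 := by
    simp only [hr2, coeff_sub, coeff_C_mul, ← hb, ← hc]; ring
  have hc3 : r3.coeff d = 0 := by
    simp only [hr3, coeff_sub, coeff_C_mul, ← ha, ← hb]; ring
  have he1 : r1.eval t₀ = 0 := by simp only [hr1, eval_sub, eval_mul, eval_C]; exact h₁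
  have he2 : r2.eval t₀ = 0 := by simp only [hr2, eval_sub, eval_mul, eval_C]; exact h₂
  have he3 : r3.eval t₀ = 0 := by simp only [hr3, eval_sub, eval_mul, eval_C]; exact h₃
  set G : Polynomial (Polynomial K) := homogFibre p₁ p₂ p d a b c with hG
  have hGdef : G = gcd (gcd (homog d r1) (homog d r2)) (homog d r3) := by
    rw [hG]; unfold homogFibre
    rw [hr1, hr2, hr3, homog_comb, homog_comb, homog_comb]
  -- divisibilities
  have hdvdX : Polynomial.C (X : K[X]) ∣ G := by
    rw [hGdef]
    exact dvd_gcd (dvd_gcd (C_X_dvd_homog hc1) (C_X_dvd_homog hc2)) (C_X_dvd_homog hc3)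
  have hdvdL : (X - Polynomial.C (Polynomial.C t₀ * X)) ∣ G := by
    rw [hGdef]
    exact dvd_gcd (dvd_gcd (linfac_dvd hn1 he1) (linfac_dvd hn2 he2)) (linfac_dvd hn3 he3)
  -- nontriviality of (a, b, c)
  have hnz : ¬ (p₁ = 0 ∧ p₂ = 0 ∧ p = 0) := by
    rintro ⟨e1, e2, e3⟩
    rw [e1, e2, e3] at hgcd
    simp only [gcd_zero_right] at hgcd
    exact (not_isUnit_zero : ¬ IsUnit (0 : K[X])) (by simpa using hgcd)
  have habc : a ≠ 0 ∨ b ≠ 0 ∨ c ≠ 0 := by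
    have hkey : ∃ q : K[X], (q = p₁ ∨ q = p₂ ∨ q = p) ∧ q ≠ 0 ∧ q.natDegree = d := by
      by_cases hd0 : d = 0
      · have hall : p₁.natDegree = 0 ∧ p₂.natDegree = 0 ∧ p.natDegree = 0 :=
          ⟨le_antisymm (hd0 ▸ hd1) (Nat.zero_le _), le_antisymm (hd0 ▸ hd2) (Nat.zero_le _),
            le_antisymm (hd0 ▸ hd3) (Nat.zero_le _)⟩
        by_cases h1 : p₁ = 0
        · by_cases h2 : p₂ = 0
          · have h3 : p ≠ 0 := fun h3 => hnz ⟨h1, h2, h3⟩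
            exact ⟨p, Or.inr (Or.inr rfl), h3, hd0 ▸ hall.2.2⟩
          · exact ⟨p₂, Or.inr (Or.inl rfl), h2, hd0 ▸ hall.2.1⟩
        · exact ⟨p₁, Or.inl rfl, h1, hd0 ▸ hall.1⟩
      · have : d = p₁.natDegree ∨ d = p₂.natDegree ∨ d = p.natDegree := by
          rcases max_choice (max p₁.natDegree p₂.natDegree) p.natDegree with h | h
          · rcases max_choice p₁.natDegree p₂.natDegree with h' | h'
            · exact Or.inl (by rw [hd, h, h'])
            · exact Or.inr (Or.inl (by rw [hd, h, h']))
          · exact Or.inr (Or.inr (by rw [hd, h]))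
        rcases this with h | h | h
        · exact ⟨p₁, Or.inl rfl, fun hq => hd0 (by rw [h, hq, natDegree_zero]), h.symm⟩
        · exact ⟨p₂, Or.inr (Or.inl rfl), fun hq => hd0 (by rw [h, hq, natDegree_zero]), h.symm⟩
        · exact ⟨p, Or.inr (Or.inr rfl), fun hq => hd0 (by rw [h, hq, natDegree_zero]), h.symm⟩
    obtain ⟨q, hq, hq0, hqd⟩ := hkey
    have hlc : q.coeff d ≠ 0 := by
      rw [← hqd]
      exact fun h => hq0 (leadingCoeff_eq_zero.mp h)
    rcases hq with h | h | h
    · exact Or.inl (by rw [ha, ← h]; exact hlc)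
    · exact Or.inr (Or.inl (by rw [hb, ← h]; exact hlc))
    · exact Or.inr (Or.inr (by rw [hc, ← h]; exact hlc))
  -- G ≠ 0
  have hG0 : G ≠ 0 := by
    intro h0
    rw [hGdef, gcd_eq_zero_iff, gcd_eq_zero_iff] at h0
    obtain ⟨⟨hz1, hz2⟩, hz3⟩ := h0
    have hr1z : r1 = 0 := eq_zero_of_homog_eq_zero hn1 hz1
    have hr2z : r2 = 0 := eq_zero_of_homog_eq_zero hn2 hz2
    have hr3z : r3 = 0 := eq_zero_of_homog_eq_zero hn3 hz3
    rcases habc with h | h | h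
    · refine hline ⟨-c, 0, a, Or.inr (Or.inr h), ?_⟩
      rw [hr1] at hr1z
      simp only [map_neg, map_zero]
      linear_combination hr1z
    · refine hline ⟨0, -c, b, Or.inr (Or.inr h), ?_⟩
      rw [hr2] at hr2z
      simp only [map_neg, map_zero]
      linear_combination hr2z
    · refine hline ⟨-c, 0, a, Or.inl (neg_ne_zero.mpr h), ?_⟩
      rw [hr1] at hr1z
      simp only [map_neg, map_zero]
      linear_combination hr1z
  -- final: suppose totalDeg G ≤ 1
  by_contra hlt
  push_neg at hlt
  have hlt' : totalDeg G < 2 := hlt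
  have hle : G.support.sup (fun j => j + (G.coeff j).natDegree) ≤ 1 := by
    have : totalDeg G ≤ 1 := Nat.lt_succ_iff.mp hlt'
    simpa [totalDeg] using this
  have hsup : ∀ j ∈ G.support, j + (G.coeff j).natDegree ≤ 1 := by
    intro j hj
    exact le_trans (Finset.le_sup (f := fun j => j + (G.coeff j).natDegree) hj) hle
  have hXcoeff : ∀ j, (X : K[X]) ∣ G.coeff j := (C_dvd_iff_dvd_coeff _ _).mp hdvdX
  have hhigh : ∀ j, 1 ≤ j → G.coeff j = 0 := by
    intro j hj
    by_contra hne
    have hmem : j ∈ G.support := mem_support_iff.mpr hne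
    have h1 := hsup j hmem
    have hj1 : j = 1 := le_antisymm (le_trans (Nat.le_add_right _ _) h1) hj
    subst hj1
    have hnd : (G.coeff 1).natDegree = 0 := by omega
    have := Polynomial.natDegree_le_of_dvd (hXcoeff 1) hne
    rw [natDegree_X, hnd] at this
    omega
  have hGC : G = Polynomial.C (G.coeff 0) := by
    have hnd : G.natDegree ≤ 0 :=
      Polynomial.natDegree_le_iff_coeff_eq_zero.mpr fun m hm => hhigh m hm
    exact Polynomial.eq_C_of_natDegree_le_zero hnd
  have : Polynomial.eval (Polynomial.C t₀ * X) G = 0 := Polynomial.dvd_iff_isRoot.mp hdvdL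
  rw [hGC] at this
  simp only [eval_C] at this
  rw [hGC, this, map_zero] at hG0
  exact hG0 rfl
end

section
/- Let P(t) be a proper parametrization with limit point P_L unreachable via P (no t₀ ∈ K with P(t₀) = P_L). Let U(t) = P(1/t) (with components the degree-d reversals of p₁, p₂, p), and let H_L^U(t) be the gcd of the fibre-function polynomials of P_L with respect to U. Then H_L^U(t) = t^r for some integer r ≥ 1. -/
open Polynomial

/-- The fibre function of the projective point `(a : b : c)` with respect to the
parametrization `(p₁ : p₂ : p)`. -/
noncomputable def fibreFun {K : Type*} [Field K] [DecidableEq K]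
    (p₁ p₂ p : K[X]) (a b c : K) : K[X] :=
  gcd (gcd (C a * p - C c * p₁) (C b * p - C c * p₂)) (C a * p₂ - C b * p₁)


lemma eval_reflect_aux {K : Type*} [Field K] (d : ℕ) (q : Polynomial K)
    (hq : q.natDegree ≤ d) (t : K) (ht : t ≠ 0) :
    (reflect d q).eval t = t ^ d * q.eval t⁻¹ := by
  letI hinst : Invertible t⁻¹ := ⟨t, by field_simp, by field_simp⟩
  have h := eval₂_reflect_mul_pow (RingHom.id K) t⁻¹ d q hq
  have hinv : (⅟ (t⁻¹) : K) = t := rfl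
  rw [hinv] at h
  simp only [eval₂_eq_eval_map, Polynomial.map_id] at h
  rw [← h]
  rw [mul_left_comm, ← mul_pow, mul_inv_cancel₀ ht, one_pow, mul_one]


/-- If the limit point `P_L = (a_d : b_d : c_d)` of a proper parametrization `P(t)` is
unreachable via `P(t)`, then the fibre function of `P_L` with respect to the
reparametrization `U(t) = P(1/t)` (whose components are the degree-`d` reversals)
equals `t^r`, up to a nonzero constant, for some `r ≥ 1`. -/
theorem fibre_limit_unreachable (K : Type*) [Field K] [DecidableEq K]
    [IsAlgClosed K] [CharZero K] (p₁ p₂ p : K[X])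
    (hgcd : IsUnit (gcd (gcd p₁ p₂) p)) (hproper : IsProperParam p₁ p₂ p)
    (d : ℕ) (hd : d = max (max p₁.natDegree p₂.natDegree) p.natDegree)
    (a b c : K) (ha : a = p₁.coeff d) (hb : b = p₂.coeff d) (hc : c = p.coeff d)
    (hunreach : ∀ t₀ : K, ¬(a * p.eval t₀ - c * p₁.eval t₀ = 0 ∧
      b * p.eval t₀ - c * p₂.eval t₀ = 0 ∧ a * p₂.eval t₀ - b * p₁.eval t₀ = 0)) :
    ∃ r : ℕ, 1 ≤ r ∧ ∃ c₀ : K, c₀ ≠ 0 ∧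
      fibreFun (reflect d p₁) (reflect d p₂) (reflect d p) a b c = C c₀ * X ^ r := by
  have hd₁ : p₁.natDegree ≤ d := by rw [hd]; exact le_max_of_le_left (le_max_left _ _)
  have hd₂ : p₂.natDegree ≤ d := by rw [hd]; exact le_max_of_le_left (le_max_right _ _)
  have hdp : p.natDegree ≤ d := by rw [hd]; exact le_max_right _ _
  set A : K[X] := C a * reflect d p - C c * reflect d p₁ with hA
  set B : K[X] := C b * reflect d p - C c * reflect d p₂ with hB
  set D : K[X] := C a * reflect d p₂ - C b * reflect d p₁ with hD
  set H : K[X] := gcd (gcd A B) D with hH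
  have hFib : fibreFun (reflect d p₁) (reflect d p₂) (reflect d p) a b c = H := rfl
  -- H ≠ 0
  have hrefl : ∀ q₁ q₂ : K[X], ∀ x y : K, C x * reflect d q₁ - C y * reflect d q₂ =
      reflect d (C x * q₁ - C y * q₂) := by
    intro q₁ q₂ x y
    rw [reflect_sub, reflect_C_mul, reflect_C_mul]
  have hH0 : H ≠ 0 := by
    intro h0
    rw [hH, gcd_eq_zero_iff, gcd_eq_zero_iff] at h0
    obtain ⟨⟨hA0, hB0⟩, hD0⟩ := h0
    rw [hA, hrefl, reflect_eq_zero_iff] at hA0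
    rw [hB, hrefl, reflect_eq_zero_iff] at hB0
    rw [hD, hrefl, reflect_eq_zero_iff] at hD0
    refine hunreach 0 ⟨?_, ?_, ?_⟩
    · have := congrArg (eval 0) hA0; simpa using this
    · have := congrArg (eval 0) hB0; simpa using this
    · have := congrArg (eval 0) hD0; simpa using this
  -- X ∣ H
  have hcoeff0 : ∀ q : K[X], (reflect d q).coeff 0 = q.coeff d := by
    intro q; rw [coeff_reflect, revAt_le (Nat.zero_le d), Nat.sub_zero]
  have hXA : (X : K[X]) ∣ A := by
    rw [X_dvd_iff]
    simp [hA, coeff_sub, coeff_C_mul, hcoeff0, ← ha, ← hc, mul_comm]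
  have hXB : (X : K[X]) ∣ B := by
    rw [X_dvd_iff]
    simp [hB, coeff_sub, coeff_C_mul, hcoeff0, ← hb, ← hc, mul_comm]
  have hXD : (X : K[X]) ∣ D := by
    rw [X_dvd_iff]
    simp [hD, coeff_sub, coeff_C_mul, hcoeff0, ← ha, ← hb, mul_comm]
  have hXH : (X : K[X]) ∣ H := dvd_gcd (dvd_gcd hXA hXB) hXD
  -- roots of H are all zero
  have hroots : ∀ x ∈ H.roots, x = 0 := by
    intro x hx
    by_contra hx0
    have hxr : H.eval x = 0 := isRoot_of_mem_roots hx
    have hevals : ∀ q : K[X], H ∣ q → q.eval x = 0 := by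
      intro q ⟨w, hw⟩
      rw [hw, eval_mul, hxr, zero_mul]
    have hAx := hevals A (dvd_trans (gcd_dvd_left _ _) (gcd_dvd_left _ _) : H ∣ A)
    have hBx := hevals B (dvd_trans (gcd_dvd_left _ _) (gcd_dvd_right _ _))
    have hDx := hevals D (gcd_dvd_right _ _)
    have hxd : (x : K) ^ d ≠ 0 := pow_ne_zero _ hx0
    refine hunreach x⁻¹ ⟨?_, ?_, ?_⟩
    · have : x ^ d * (a * p.eval x⁻¹ - c * p₁.eval x⁻¹) = 0 := by
        rw [hA] at hAx
        simp only [eval_sub, eval_mul, eval_C,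
          eval_reflect_aux d p hdp x hx0, eval_reflect_aux d p₁ hd₁ x hx0] at hAx
        linear_combination hAx
      exact (mul_eq_zero.1 this).resolve_left hxd
    · have : x ^ d * (b * p.eval x⁻¹ - c * p₂.eval x⁻¹) = 0 := by
        rw [hB] at hBx
        simp only [eval_sub, eval_mul, eval_C,
          eval_reflect_aux d p hdp x hx0, eval_reflect_aux d p₂ hd₂ x hx0] at hBx
        linear_combination hBx
      exact (mul_eq_zero.1 this).resolve_left hxd
    · have : x ^ d * (a * p₂.eval x⁻¹ - b * p₁.eval x⁻¹) = 0 := by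
        rw [hD] at hDx
        simp only [eval_sub, eval_mul, eval_C,
          eval_reflect_aux d p₂ hd₂ x hx0, eval_reflect_aux d p₁ hd₁ x hx0] at hDx
        linear_combination hDx
      exact (mul_eq_zero.1 this).resolve_left hxd
  -- assemble
  have hsplit : Splits H := IsAlgClosed.splits H
  have hprod := hsplit.eq_prod_roots
  have hrootsrep : H.roots = Multiset.replicate H.roots.card 0 :=
    Multiset.eq_replicate.2 ⟨rfl, hroots⟩
  refine ⟨H.roots.card, ?_, H.leadingCoeff, leadingCoeff_ne_zero.2 hH0, ?_⟩
  · have h0mem : (0 : K) ∈ H.roots := by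
      rw [mem_roots hH0]
      obtain ⟨w, hw⟩ := hXH
      simp [IsRoot, hw]
    exact Multiset.card_pos_iff_exists_mem.2 ⟨0, h0mem⟩
  · rw [hFib]
    conv_lhs => rw [hprod, hrootsrep]
    simp [Multiset.map_replicate, Multiset.prod_replicate]
end

section
/- Suppose P_L is reachable via P with fibre function H_L(t) = ∏ᵢ(t−sᵢ)^{kᵢ}, where all sᵢ ≠ 0. Then the fibre function of P_L with respect to U(t) = P(1/t) equals, up to a nonzero constant, H_L^U(t) = t^r·∏ᵢ(t − 1/sᵢ)^{kᵢ} for some integer r ≥ 1. -/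
open Polynomial

/- ---------- auxiliary lemmas ---------- -/

lemma my_reflect_sub {K : Type*} [Field K] (f g : K[X]) (N : ℕ) :
    reflect N (f - g) = reflect N f - reflect N g := by
  ext i
  simp [coeff_reflect, coeff_sub]

lemma my_natDegree_reflect_le {K : Type*} [Field K] {f : K[X]} {d : ℕ}
    (hf : f.natDegree ≤ d) : (reflect d f).natDegree ≤ d := by
  rw [natDegree_le_iff_coeff_eq_zero] at hf ⊢
  intro N hN
  rw [coeff_reflect, revAt_eq_self_of_lt hN]
  exact hf N hN

lemma my_reflect_reflect {K : Type*} [Field K] (f : K[X]) (d : ℕ) :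
    reflect d (reflect d f) = f := by
  ext i
  simp [coeff_reflect, revAt_invol]

lemma my_reflect_pow {K : Type*} [Field K] (g : K[X]) (hg : g.natDegree ≤ 1) (n : ℕ) :
    reflect n (g ^ n) = (reflect 1 g) ^ n := by
  induction n with
  | zero => simp
  | succ m ih =>
    have h1 : (g ^ m).natDegree ≤ m :=
      natDegree_pow_le.trans ((Nat.mul_le_mul_left m hg).trans_eq (mul_one m))
    calc reflect (m + 1) (g ^ (m + 1)) = reflect (1 + m) (g * g ^ m) := by
          rw [pow_succ, mul_comm (g^m) g, add_comm]
      _ = reflect 1 g * reflect m (g ^ m) := reflect_mul g (g ^ m) hg h1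
      _ = (reflect 1 g) ^ (m + 1) := by rw [ih, pow_succ, mul_comm]

lemma my_reflect_linear {K : Type*} [Field K] (y : K) (hy : y ≠ 0) :
    reflect 1 (X - C y : K[X]) = C (-y) * (X - C y⁻¹) := by
  have h1 : reflect 1 (X - C y : K[X]) = reflect 1 (X : K[X]) - reflect 1 (C y) :=
    my_reflect_sub _ _ _
  have h2 : reflect 1 (X : K[X]) = 1 := by
    simpa using reflect_monomial 1 1 (R := K)
  have h3 : reflect 1 (C y : K[X]) = C y * X := by
    simpa using reflect_C y 1 (R := K)
  rw [h1, h2, h3, map_neg, neg_mul, mul_sub, ← C_mul, mul_inv_cancel₀ hy, map_one]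
  ring

lemma my_dvd_reflect_of_dvd {K : Type*} [Field K] {d n : ℕ} {f : K[X]}
    (hf : f.natDegree ≤ d) {x : K} (hx : x ≠ 0)
    (h : (X - C x⁻¹) ^ n ∣ f) : (X - C x) ^ n ∣ reflect d f := by
  rcases eq_or_ne f 0 with rfl | hf0
  · simp
  obtain ⟨q, hq⟩ := h
  have hpow : ((X - C x⁻¹ : K[X]) ^ n).natDegree = n := by
    rw [natDegree_pow, natDegree_X_sub_C, mul_one]
  have hnd : n ≤ d := by
    have := natDegree_le_of_dvd ⟨q, hq⟩ hf0
    omega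
  have hq0 : q ≠ 0 := by
    rintro rfl; rw [mul_zero] at hq; exact hf0 hq
  have hqd : q.natDegree ≤ d - n := by
    have hmul : f.natDegree = n + q.natDegree := by
      rw [hq, natDegree_mul (pow_ne_zero _ (X_sub_C_ne_zero _)) hq0, hpow]
    omega
  have hrefl : reflect d f = reflect n ((X - C x⁻¹) ^ n) * reflect (d - n) q := by
    have := reflect_mul ((X - C x⁻¹ : K[X]) ^ n) q (hpow.le) hqd
    rw [Nat.add_sub_cancel' hnd] at this
    rw [hq, this]
  have hlin : reflect n ((X - C x⁻¹ : K[X]) ^ n) = (C (-x⁻¹)) ^ n * (X - C x) ^ n := by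
    rw [my_reflect_pow _ (by rw [natDegree_X_sub_C]),
      my_reflect_linear x⁻¹ (inv_ne_zero hx), inv_inv, mul_pow]
  rw [hrefl, hlin]
  exact Dvd.dvd.mul_right (dvd_mul_left _ _) _

lemma my_dvd_reflect_iff {K : Type*} [Field K] {d n : ℕ} {f : K[X]}
    (hf : f.natDegree ≤ d) {x : K} (hx : x ≠ 0) :
    (X - C x) ^ n ∣ reflect d f ↔ (X - C x⁻¹) ^ n ∣ f := by
  constructor
  · intro h
    have h2 := my_dvd_reflect_of_dvd (my_natDegree_reflect_le hf)
      (inv_ne_zero hx) (by rwa [inv_inv])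
    rwa [my_reflect_reflect] at h2
  · exact my_dvd_reflect_of_dvd hf hx

lemma my_reflect_prod {K : Type*} [Field K] {ι : Type*} (t : Finset ι)
    (f : ι → K[X]) (m : ι → ℕ) (h : ∀ i ∈ t, (f i).natDegree ≤ m i) :
    reflect (∑ i ∈ t, m i) (∏ i ∈ t, f i) = ∏ i ∈ t, reflect (m i) (f i) := by
  induction t using Finset.cons_induction with
  | empty => simp
  | cons a t ha ih =>
    rw [Finset.prod_cons, Finset.sum_cons,
      reflect_mul _ _ (h a (Finset.mem_cons_self a t))
        ((natDegree_prod_le _ _).trans (Finset.sum_le_sum fun i hi => h i (Finset.mem_cons_of_mem hi))),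
      Finset.prod_cons, ih fun i hi => h i (Finset.mem_cons_of_mem hi)]

/-- If the limit point `P_L = (a_d : b_d : c_d)` is reachable via `P(t)` with fibre
function `H_L(t) = ∏ᵢ(t − sᵢ)^{kᵢ}` where all `sᵢ ≠ 0`, then the fibre function of
`P_L` with respect to `U(t) = P(1/t)` equals, up to a nonzero constant,
`t^r·∏ᵢ(t − 1/sᵢ)^{kᵢ}` for some `r ≥ 1`. -/
theorem fibre_limit_reachable (K : Type*) [Field K] [DecidableEq K]
    [IsAlgClosed K] [CharZero K] (p₁ p₂ p : K[X])
    (hgcd : IsUnit (gcd (gcd p₁ p₂) p)) (hproper : IsProperParam p₁ p₂ p)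
    (d : ℕ) (hd : d = max (max p₁.natDegree p₂.natDegree) p.natDegree)
    (a b c : K) (ha : a = p₁.coeff d) (hb : b = p₂.coeff d) (hc : c = p.coeff d)
    (n : ℕ) (hn : 1 ≤ n) (s : Fin n → K) (k : Fin n → ℕ)
    (hs : Function.Injective s) (hs0 : ∀ i, s i ≠ 0) (hk : ∀ i, 1 ≤ k i)
    (hHL : fibreFun p₁ p₂ p a b c = ∏ i, (X - C (s i)) ^ k i) :
    ∃ r : ℕ, 1 ≤ r ∧ ∃ c₀ : K, c₀ ≠ 0 ∧
      fibreFun (reflect d p₁) (reflect d p₂) (reflect d p) a b c =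
        C c₀ * X ^ r * ∏ i, (X - C (s i)⁻¹) ^ k i := by
  -- abbreviations
  set A : K[X] := C a * p - C c * p₁ with hAdef
  set B : K[X] := C b * p - C c * p₂ with hBdef
  set D : K[X] := C a * p₂ - C b * p₁ with hDdef
  set H : K[X] := ∏ i, (X - C (s i)) ^ k i with hHdef
  set M₀ : K[X] := ∏ i, (X - C (s i)⁻¹) ^ k i with hM₀def
  have hp₁d : p₁.natDegree ≤ d := hd ▸ le_trans (le_max_left _ _) (le_max_left _ _)
  have hp₂d : p₂.natDegree ≤ d := hd ▸ le_trans (le_max_right _ _) (le_max_left _ _)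
  have hpd : p.natDegree ≤ d := hd ▸ le_max_right _ _
  have hAd : A.natDegree ≤ d :=
    (natDegree_sub_le _ _).trans (max_le ((natDegree_C_mul_le _ _).trans hpd)
      ((natDegree_C_mul_le _ _).trans hp₁d))
  have hBd : B.natDegree ≤ d :=
    (natDegree_sub_le _ _).trans (max_le ((natDegree_C_mul_le _ _).trans hpd)
      ((natDegree_C_mul_le _ _).trans hp₂d))
  have hDd : D.natDegree ≤ d :=
    (natDegree_sub_le _ _).trans (max_le ((natDegree_C_mul_le _ _).trans hp₂d)
      ((natDegree_C_mul_le _ _).trans hp₁d))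
  have hAc : A.coeff d = 0 := by
    simp only [hAdef, coeff_sub, coeff_C_mul, ha, hc]; ring
  have hBc : B.coeff d = 0 := by
    simp only [hBdef, coeff_sub, coeff_C_mul, hb, hc]; ring
  have hDc : D.coeff d = 0 := by
    simp only [hDdef, coeff_sub, coeff_C_mul, ha, hb]; ring
  have hH : gcd (gcd A B) D = H := hHL
  have hHmonic : H.Monic :=
    monic_prod_of_monic _ _ fun i _ => (monic_X_sub_C _).pow _
  have hHne : H ≠ 0 := hHmonic.ne_zero
  set G : K[X] := gcd (gcd (reflect d A) (reflect d B)) (reflect d D) with hGdef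
  have hfib : fibreFun (reflect d p₁) (reflect d p₂) (reflect d p) a b c = G := by
    rw [fibreFun, hGdef, hAdef, hBdef, hDdef]
    simp only [my_reflect_sub, reflect_C_mul]
  -- dvd characterisations
  have hdvdH : ∀ q : K[X], q ∣ H ↔ q ∣ A ∧ q ∣ B ∧ q ∣ D := by
    intro q
    rw [← hH, dvd_gcd_iff, dvd_gcd_iff]
    exact and_assoc
  have hdvdG : ∀ q : K[X], q ∣ G ↔ q ∣ reflect d A ∧ q ∣ reflect d B ∧ q ∣ reflect d D := by
    intro q
    rw [hGdef, dvd_gcd_iff, dvd_gcd_iff]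
    exact and_assoc
  -- not all of A, B, D are zero
  have hABD : ¬(A = 0 ∧ B = 0 ∧ D = 0) := by
    rintro ⟨h1, h2, h3⟩
    rw [h1, h2, h3] at hH
    simp only [gcd_zero_right, normalize_zero] at hH
    exact hHne hH.symm
  have hG0 : G ≠ 0 := by
    rw [hGdef, Ne, gcd_eq_zero_iff, gcd_eq_zero_iff, reflect_eq_zero_iff,
      reflect_eq_zero_iff, reflect_eq_zero_iff, and_assoc]
    exact hABD
  -- X divides G
  have hXrefl : ∀ f : K[X], f.coeff d = 0 → (X : K[X]) ∣ reflect d f := by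
    intro f hf
    rw [X_dvd_iff, coeff_reflect, revAt_le (Nat.zero_le d), Nat.sub_zero]
    exact hf
  have hXG : (X : K[X]) ∣ G :=
    (hdvdG X).2 ⟨hXrefl A hAc, hXrefl B hBc, hXrefl D hDc⟩
  set r : ℕ := rootMultiplicity 0 G with hrdef
  have hr1 : 1 ≤ r := by
    refine (rootMultiplicity_pos hG0).2 ?_
    obtain ⟨u, hu⟩ := hXG
    simp [IsRoot, hu]
  -- the degree bound for H
  set h : ℕ := ∑ i, k i with hhdef
  have hHh : H.natDegree ≤ h := by
    refine (natDegree_prod_le _ _).trans (Finset.sum_le_sum fun i _ => ?_)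
    exact natDegree_pow_le.trans (by rw [natDegree_X_sub_C, mul_one])
  -- reflect of H
  set e : K := ∏ i, (-(s i)) ^ k i with hedef
  have he : e ≠ 0 :=
    Finset.prod_ne_zero_iff.2 fun i _ => pow_ne_zero _ (neg_ne_zero.2 (hs0 i))
  have hreflH : reflect h H = C e * M₀ := by
    rw [hHdef, hhdef, my_reflect_prod Finset.univ _ k
      (fun i _ => natDegree_pow_le.trans (by rw [natDegree_X_sub_C, mul_one]))]
    rw [hedef, hM₀def, map_prod, ← Finset.prod_mul_distrib]
    refine Finset.prod_congr rfl fun i _ => ?_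
    rw [my_reflect_pow _ (by rw [natDegree_X_sub_C]),
      my_reflect_linear (s i) (hs0 i), mul_pow, map_pow]
  have hM₀monic : M₀.Monic :=
    monic_prod_of_monic _ _ fun i _ => (monic_X_sub_C _).pow _
  have hM₀ne : M₀ ≠ 0 := hM₀monic.ne_zero
  -- key equivalence at nonzero points
  have key : ∀ x : K, x ≠ 0 → ∀ m : ℕ, ((X - C x) ^ m ∣ G ↔ (X - C x) ^ m ∣ M₀) := by
    intro x hx m
    rw [hdvdG, my_dvd_reflect_iff hAd hx, my_dvd_reflect_iff hBd hx,
      my_dvd_reflect_iff hDd hx, ← hdvdH, ← my_dvd_reflect_iff hHh hx, hreflH,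
      IsUnit.dvd_mul_left (isUnit_C.2 he.isUnit)]
  set M : K[X] := X ^ r * M₀ with hMdef
  have hMmonic : M.Monic := (monic_X_pow r).mul hM₀monic
  have hMne : M ≠ 0 := hMmonic.ne_zero
  have hmult : ∀ x : K, rootMultiplicity x G = rootMultiplicity x M := by
    intro x
    have hXM0 : (X : K[X]) ^ r * M₀ ≠ 0 := hMdef ▸ hMne
    rcases eq_or_ne x 0 with rfl | hx
    · rw [hMdef, rootMultiplicity_mul hXM0]
      have h1 : rootMultiplicity (0 : K) ((X : K[X]) ^ r) = r := by
        have := rootMultiplicity_X_sub_C_pow (0 : K) r (R := K)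
        simpa using this
      have h2 : rootMultiplicity (0 : K) M₀ = 0 := by
        refine rootMultiplicity_eq_zero ?_
        simp only [IsRoot, hM₀def, eval_prod, eval_pow, eval_sub, eval_X, eval_C]
        refine Finset.prod_ne_zero_iff.2 fun i _ => pow_ne_zero _ ?_
        simpa using inv_ne_zero (hs0 i)
      rw [h1, h2, add_zero, hrdef]
    · have hGM : rootMultiplicity x G = rootMultiplicity x M₀ := by
        refine le_antisymm ?_ ?_
        · rw [le_rootMultiplicity_iff hM₀ne, ← key x hx]
          exact pow_rootMultiplicity_dvd G x
        · rw [le_rootMultiplicity_iff hG0, key x hx]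
          exact pow_rootMultiplicity_dvd M₀ x
      rw [hGM, hMdef, rootMultiplicity_mul hXM0]
      have h1 : rootMultiplicity x ((X : K[X]) ^ r) = 0 :=
        rootMultiplicity_eq_zero (by simp [IsRoot, pow_eq_zero_iff, hx])
      rw [h1, zero_add]
  have hroots : G.roots = M.roots := by
    ext x
    rw [count_roots, count_roots, hmult]
  have hsG : Splits G := IsAlgClosed.splits G
  have hsM : Splits M := IsAlgClosed.splits M
  have h1 := hsG.eq_prod_roots
  have h2 := hsM.eq_prod_roots_of_monic hMmonic
  rw [hroots, ← h2] at h1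
  refine ⟨r, hr1, G.leadingCoeff, leadingCoeff_ne_zero.2 hG0, ?_⟩
  conv_lhs => rw [hfib, h1]
  rw [hMdef, mul_assoc]
end
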